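/- For every x ∈ ℝ^n, the gradient of the Gaussian smoothing approximates the true gradient: ‖∇h_μ(x) − ∇h(x)‖ ≤ (μ/2) L (n + 3)^{3/2}. -/

import Mathlib

open MeasureTheory ProbabilityTheory Real

open scoped NNReal ENNReal

noncomputable section

/-- `Vec n` is the Euclidean space `ℝ^n`. -/
abbrev Vec (n : ℕ) := EuclideanSpace ℝ (Fin n)

/-- The standard Gaussian measure on `ℝ^n` (mean zero, identity covariance). -/
def stdGaussian (n : ℕ) : Measure (Vec n) :=
  (Measure.pi fun _ : Fin n => gaussianReal 0 1).map (EuclideanSpace.equiv (Fin n) ℝ).symm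

/-- Gaussian smooth approximation `h_μ(x) = E_u[h(x + μ u)]`. -/
def smooth {n : ℕ} (h : Vec n → ℝ) (μ : ℝ) (x : Vec n) : ℝ :=
  ∫ u, h (x + μ • u) ∂(stdGaussian n)


lemma pdf_eq (t : ℝ) : gaussianPDFReal 0 1 t = (√(2 * π))⁻¹ * rexp (-(1/2) * t ^ 2) := by
  unfold gaussianPDFReal
  norm_num
  left; ring_nf

lemma int_Ioi : ∫ t in Set.Ioi (0:ℝ), t * rexp (-(1/2) * t ^ 2) = 1 := by
  have hderiv : ∀ t ∈ Set.Ici (0:ℝ), HasDerivAt (fun t : ℝ => -rexp (-(1/2) * t ^ 2))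
      (t * rexp (-(1/2) * t ^ 2)) t := by
    intro t _
    have h1 : HasDerivAt (fun t : ℝ => -(1/2) * t ^ 2) (-t) t := by
      simpa using ((hasDerivAt_pow 2 t).const_mul (-(1/2) : ℝ))
    have h2 := (h1.exp).fun_neg
    refine h2.congr_deriv ?_
    ring
  have hint : IntegrableOn (fun t : ℝ => t * rexp (-(1/2) * t ^ 2)) (Set.Ioi 0) :=
    (integrable_mul_exp_neg_mul_sq (by norm_num : (0:ℝ) < 1/2)).integrableOn
  have htend : Filter.Tendsto (fun t : ℝ => -rexp (-(1/2) * t ^ 2)) Filter.atTop (nhds 0) := by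
    rw [← neg_zero]
    refine Filter.Tendsto.neg ?_
    refine Real.tendsto_exp_atBot.comp ?_
    have h2 : Filter.Tendsto (fun t : ℝ => (1/2) * t ^ 2) Filter.atTop Filter.atTop :=
      (Filter.tendsto_pow_atTop two_ne_zero).const_mul_atTop (by norm_num)
    have := Filter.tendsto_neg_atTop_atBot.comp h2
    convert this using 2 with t
    simp only [Function.comp]
    ring
  have := integral_Ioi_of_hasDerivAt_of_tendsto' hderiv hint htend
  simpa using this
noncomputable section

lemma gauss_eq : gaussianReal 0 1 =
    volume.withDensity (fun t => ((Real.toNNReal (gaussianPDFReal 0 1 t) : ℝ≥0) : ℝ≥0∞)) := by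
  rw [gaussianReal_of_var_ne_zero 0 one_ne_zero]
  rfl

lemma pdf_meas : Measurable fun t => Real.toNNReal (gaussianPDFReal 0 1 t) :=
  (measurable_gaussianPDFReal 0 1).real_toNNReal

lemma pdf_smul (g : ℝ → ℝ) (t : ℝ) :
    (Real.toNNReal (gaussianPDFReal 0 1 t) : ℝ≥0) • g t = gaussianPDFReal 0 1 t * g t := by
  simp [NNReal.smul_def, Real.coe_toNNReal _ (gaussianPDFReal_nonneg 0 1 t)]

lemma integrable_gauss_of (g : ℝ → ℝ)
    (H : Integrable (fun t => gaussianPDFReal 0 1 t * g t) volume) :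
    Integrable g (gaussianReal 0 1) := by
  rw [gauss_eq, integrable_withDensity_iff_integrable_smul pdf_meas]
  simpa only [pdf_smul] using H

lemma integral_gauss_eq (g : ℝ → ℝ) :
    ∫ t, g t ∂(gaussianReal 0 1) = ∫ t, gaussianPDFReal 0 1 t * g t := by
  rw [gauss_eq, integral_withDensity_eq_integral_smul pdf_meas]
  simp only [pdf_smul]

lemma integrable_abs_exp : Integrable (fun t : ℝ => |t| * rexp (-(1/2) * t ^ 2)) volume := by
  have := (integrable_mul_exp_neg_mul_sq (by norm_num : (0:ℝ) < 1/2)).abs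
  refine this.congr (Filter.Eventually.of_forall fun t => ?_)
  show |t * rexp (-(1/2) * t ^ 2)| = _
  rw [abs_mul, abs_of_pos (exp_pos _)]

lemma integrable_abs_gauss : Integrable (fun t : ℝ => |t|) (gaussianReal 0 1) := by
  refine integrable_gauss_of _ ?_
  have := integrable_abs_exp.const_mul (√(2 * π))⁻¹
  refine this.congr (Filter.Eventually.of_forall fun t => ?_)
  show _ = gaussianPDFReal 0 1 t * |t|
  rw [pdf_eq]; ring

lemma integrable_sq_gauss : Integrable (fun t : ℝ => t ^ 2) (gaussianReal 0 1) := by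
  refine integrable_gauss_of _ ?_
  have h0 := integrable_rpow_mul_exp_neg_mul_sq (by norm_num : (0:ℝ) < 1/2)
    (by norm_num : (-1 : ℝ) < 2)
  have h1 : Integrable (fun t : ℝ => t ^ 2 * rexp (-(1/2) * t ^ 2)) volume := by
    refine h0.congr (Filter.Eventually.of_forall fun t => ?_)
    show t ^ (2:ℝ) * _ = _
    rw [show ((2:ℝ) = ((2:ℕ):ℝ)) by norm_num, Real.rpow_natCast]
  have := h1.const_mul (√(2 * π))⁻¹
  refine this.congr (Filter.Eventually.of_forall fun t => ?_)
  show _ = gaussianPDFReal 0 1 t * t ^ 2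
  rw [pdf_eq]; ring

lemma integral_abs_gauss_le : ∫ t, |t| ∂(gaussianReal 0 1) ≤ 1 := by
  rw [integral_gauss_eq]
  have heq : ∀ t : ℝ, gaussianPDFReal 0 1 t * |t| = (√(2 * π))⁻¹ * (|t| * rexp (-(1/2) * |t| ^ 2)) := by
    intro t; rw [pdf_eq, sq_abs]; ring
  simp only [heq]
  rw [integral_const_mul, integral_comp_abs (f := fun s => s * rexp (-(1/2) * s ^ 2)),
    int_Ioi]
  have h2 : (2:ℝ) ≤ √(2 * π) := by
    nlinarith [Real.sq_sqrt (show (0:ℝ) ≤ 2 * π by positivity), Real.sqrt_nonneg (2 * π),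
      Real.pi_gt_three]
  calc (√(2 * π))⁻¹ * (2 * 1) ≤ (2:ℝ)⁻¹ * 2 := by
        have : (0:ℝ) < 2 := by norm_num
        gcongr
        · norm_num
      _ = 1 := by norm_num
lemma stdGaussian_eq (n : ℕ) : stdGaussian n =
    (Measure.pi fun _ : Fin n => gaussianReal 0 1).map
      (MeasurableEquiv.toLp 2 (Fin n → ℝ)) := rfl

instance (n : ℕ) : IsProbabilityMeasure (stdGaussian n) := by
  rw [stdGaussian_eq]
  exact Measure.isProbabilityMeasure_map (MeasurableEquiv.measurable _).aemeasurable

lemma measurePreserving_eval {n : ℕ} (i : Fin n) :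
    MeasurePreserving (Function.eval i) (Measure.pi fun _ : Fin n => gaussianReal 0 1)
      (gaussianReal 0 1) := by
  refine ⟨measurable_pi_apply i, ?_⟩
  ext s hs
  rw [Measure.map_apply (measurable_pi_apply i) hs]
  have hpre : Function.eval i ⁻¹' s =
      Set.pi Set.univ (Function.update (fun _ : Fin n => (Set.univ : Set ℝ)) i s) := by
    ext x
    simp only [Set.mem_preimage, Set.mem_pi, Set.mem_univ, forall_true_left, Function.eval]
    constructor
    · intro hx j
      rcases eq_or_ne j i with rfl | hj
      · simpa using hx
      · simp [Function.update_of_ne hj]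
    · intro hx
      simpa using hx i
  rw [hpre, Measure.pi_pi]
  rw [Finset.prod_eq_single i (fun j _ hj => by simp [Function.update_of_ne hj])
    (fun hi => absurd (Finset.mem_univ i) hi)]
  simp

lemma integrable_eval {n : ℕ} (i : Fin n) {g : ℝ → ℝ} (hg : Integrable g (gaussianReal 0 1)) :
    Integrable (fun x : Fin n → ℝ => g (x i)) (Measure.pi fun _ : Fin n => gaussianReal 0 1) :=
  ((measurePreserving_eval i).integrable_comp hg.aestronglyMeasurable).2 hg

lemma integral_eval {n : ℕ} (i : Fin n) (g : ℝ → ℝ) (hg : AEStronglyMeasurable g (gaussianReal 0 1)) :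
    ∫ x : Fin n → ℝ, g (x i) ∂(Measure.pi fun _ : Fin n => gaussianReal 0 1)
      = ∫ t, g t ∂(gaussianReal 0 1) := by
  have h := (measurePreserving_eval (n := n) i).map_eq
  calc ∫ x : Fin n → ℝ, g (x i) ∂(Measure.pi fun _ : Fin n => gaussianReal 0 1)
      = ∫ t, g t ∂((Measure.pi fun _ : Fin n => gaussianReal 0 1).map (Function.eval i)) :=
        (integral_map (measurable_pi_apply i).aemeasurable (by rw [h]; exact hg)).symm
    _ = ∫ t, g t ∂(gaussianReal 0 1) := by rw [h]

lemma normsq_eq {n : ℕ} (x : Fin n → ℝ) :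
    ‖(MeasurableEquiv.toLp 2 (Fin n → ℝ)) x‖ ^ 2 = ∑ i, x i ^ 2 := by
  rw [EuclideanSpace.norm_eq, Real.sq_sqrt (by positivity)]
  refine Finset.sum_congr rfl fun i _ => ?_
  rw [Real.norm_eq_abs, sq_abs]
  rfl

lemma integrable_normsq_std (n : ℕ) : Integrable (fun u : Vec n => ‖u‖ ^ 2) (stdGaussian n) := by
  rw [stdGaussian_eq, integrable_map_equiv]
  have hsum : Integrable (fun x : Fin n → ℝ => ∑ i, x i ^ 2)
      (Measure.pi fun _ : Fin n => gaussianReal 0 1) :=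
    integrable_finset_sum _ fun i _ => integrable_eval i integrable_sq_gauss
  exact hsum.congr (Filter.Eventually.of_forall fun x => (normsq_eq x).symm)

lemma integrable_norm_std (n : ℕ) : Integrable (fun u : Vec n => ‖u‖) (stdGaussian n) := by
  refine ((integrable_const (1:ℝ)).add (integrable_normsq_std n)).mono'
    continuous_norm.aestronglyMeasurable (Filter.Eventually.of_forall fun u => ?_)
  simp only [Real.norm_eq_abs, abs_norm, Pi.add_apply]
  nlinarith [sq_nonneg (‖u‖ - 1), norm_nonneg u]

lemma integrable_sumabs_std (n : ℕ) :
    Integrable (fun u : Vec n => ∑ i, |u i|) (stdGaussian n) := by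
  rw [stdGaussian_eq, integrable_map_equiv]
  have hsum : Integrable (fun x : Fin n → ℝ => ∑ i, |x i|)
      (Measure.pi fun _ : Fin n => gaussianReal 0 1) :=
    integrable_finset_sum _ fun i _ => integrable_eval i integrable_abs_gauss
  exact hsum.congr (Filter.Eventually.of_forall fun x => rfl)

lemma norm_le_sumabs {n : ℕ} (u : Vec n) : ‖u‖ ≤ ∑ i, |u i| := by
  rw [EuclideanSpace.norm_eq]
  have h1 : ∑ i, ‖u i‖ ^ 2 ≤ (∑ i, |u i|) ^ 2 := by
    simp only [Real.norm_eq_abs]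
    exact Finset.sum_sq_le_sq_sum_of_nonneg fun i _ => abs_nonneg _
  calc √(∑ i, ‖u i‖ ^ 2) ≤ √((∑ i, |u i|) ^ 2) := Real.sqrt_le_sqrt h1
    _ = ∑ i, |u i| := Real.sqrt_sq (by positivity)

lemma integral_norm_std_le (n : ℕ) : ∫ u, ‖u‖ ∂(stdGaussian n) ≤ (n : ℝ) := by
  have h1 : ∫ u, ‖u‖ ∂(stdGaussian n) ≤ ∫ u, ∑ i, |u i| ∂(stdGaussian n) :=
    integral_mono (integrable_norm_std n) (integrable_sumabs_std n) norm_le_sumabs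
  refine h1.trans ?_
  rw [stdGaussian_eq, integral_map_equiv]
  have h2 : ∫ x : Fin n → ℝ, ∑ i, |x i| ∂(Measure.pi fun _ : Fin n => gaussianReal 0 1)
      = ∑ i : Fin n, ∫ t, |t| ∂(gaussianReal 0 1) := by
    rw [integral_finset_sum _ fun i _ => integrable_eval i integrable_abs_gauss]
    exact Finset.sum_congr rfl fun i _ =>
      integral_eval i (fun t => |t|) integrable_abs_gauss.aestronglyMeasurable
  calc ∫ x : Fin n → ℝ, ∑ i, |((MeasurableEquiv.toLp 2 (Fin n → ℝ)) x) i|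
        ∂(Measure.pi fun _ : Fin n => gaussianReal 0 1)
      = ∑ i : Fin n, ∫ t, |t| ∂(gaussianReal 0 1) := h2
    _ ≤ ∑ i : Fin n, (1:ℝ) := Finset.sum_le_sum fun i _ => integral_abs_gauss_le
    _ = n := by simp

section main

variable {n : ℕ} {h : Vec n → ℝ} {L : NNReal} {μ : ℝ}

lemma fderiv_eq_toDual (y : Vec n) :
    fderiv ℝ h y = InnerProductSpace.toDual ℝ (Vec n) (gradient h y) := by
  rw [gradient, LinearIsometryEquiv.apply_symm_apply]

lemma fderiv_sub_norm (hL : LipschitzWith L (gradient h)) (y z : Vec n) :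
    ‖fderiv ℝ h y - fderiv ℝ h z‖ ≤ L * ‖y - z‖ := by
  rw [fderiv_eq_toDual, fderiv_eq_toDual, ← map_sub, LinearIsometryEquiv.norm_map]
  have := hL.dist_le_mul y z
  rwa [dist_eq_norm, dist_eq_norm] at this

lemma fderiv_cont (hL : LipschitzWith L (gradient h)) :
    Continuous (fun y : Vec n => fderiv ℝ h y) := by
  refine (LipschitzWith.of_dist_le_mul fun y z => ?_).continuous (K := L)
  rw [dist_eq_norm, dist_eq_norm]
  exact fderiv_sub_norm hL y z

lemma fderiv_norm_le (hL : LipschitzWith L (gradient h)) (y z : Vec n) :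
    ‖fderiv ℝ h y‖ ≤ ‖fderiv ℝ h z‖ + L * ‖y - z‖ := by
  calc ‖fderiv ℝ h y‖ ≤ ‖fderiv ℝ h z‖ + ‖fderiv ℝ h y - fderiv ℝ h z‖ := by
        have := norm_sub_norm_le (fderiv ℝ h y) (fderiv ℝ h z); linarith
    _ ≤ _ := by have := fderiv_sub_norm hL y z; linarith

lemma h_growth (hd : Differentiable ℝ h) (hL : LipschitzWith L (gradient h)) (x₀ y : Vec n) :
    |h y - h x₀| ≤ (‖fderiv ℝ h x₀‖ + L * ‖y - x₀‖) * ‖y - x₀‖ := by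
  have hb : ∀ z ∈ Metric.closedBall x₀ ‖y - x₀‖,
      ‖fderiv ℝ h z‖ ≤ ‖fderiv ℝ h x₀‖ + L * ‖y - x₀‖ := by
    intro z hz
    have hz' : ‖z - x₀‖ ≤ ‖y - x₀‖ := by
      rw [Metric.mem_closedBall, dist_eq_norm] at hz; exact hz
    have := fderiv_norm_le hL z x₀
    have hLz : (L:ℝ) * ‖z - x₀‖ ≤ L * ‖y - x₀‖ := by
      gcongr
    linarith
  have := Convex.norm_image_sub_le_of_norm_fderiv_le (fun z _ => hd z) hb
    (convex_closedBall x₀ _) (Metric.mem_closedBall_self (norm_nonneg _))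
    (by rw [Metric.mem_closedBall, dist_eq_norm])
  simpa using this

lemma hasFDerivAt_smooth (hd : Differentiable ℝ h) (hL : LipschitzWith L (gradient h))
    (hμ : 0 < μ) (x₀ : Vec n) :
    HasFDerivAt (smooth h μ) (∫ u, fderiv ℝ h (x₀ + μ • u) ∂(stdGaussian n)) x₀ := by
  have hcont : Continuous h := hd.continuous
  have key := hasFDerivAt_integral_of_dominated_of_fderiv_le
    (μ := stdGaussian n) (F := fun (x : Vec n) (u : Vec n) => h (x + μ • u))
    (F' := fun (x : Vec n) (u : Vec n) => fderiv ℝ h (x + μ • u))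
    (x₀ := x₀) (bound := fun u => ‖fderiv ℝ h x₀‖ + L * (1 + μ * ‖u‖))
    (Metric.ball_mem_nhds x₀ one_pos)
    ?_ ?_ ?_ ?_ ?_ ?_
  · exact key
  · filter_upwards with x
    exact (hcont.comp (continuous_const.add ((continuous_const (y := μ)).smul continuous_id))).aestronglyMeasurable
  · -- Integrable (fun u => h (x₀ + μ • u))
    have hb : ∀ u : Vec n, ‖h (x₀ + μ • u)‖ ≤
        |h x₀| + (‖fderiv ℝ h x₀‖ + L * (μ * ‖u‖)) * (μ * ‖u‖) := by
      intro u
      have := h_growth hd hL x₀ (x₀ + μ • u)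
      have hnn : ‖x₀ + μ • u - x₀‖ = μ * ‖u‖ := by
        rw [add_sub_cancel_left, norm_smul, Real.norm_eq_abs, abs_of_pos hμ]
      rw [hnn] at this
      rw [Real.norm_eq_abs]
      calc |h (x₀ + μ • u)| ≤ |h x₀| + |h (x₀ + μ • u) - h x₀| := by
            have := abs_sub_abs_le_abs_sub (h (x₀ + μ • u)) (h x₀); linarith [abs_sub_comm (h (x₀ + μ • u)) (h x₀)]
        _ ≤ _ := by linarith
    have hint : Integrable (fun u : Vec n =>
        |h x₀| + (‖fderiv ℝ h x₀‖ + L * (μ * ‖u‖)) * (μ * ‖u‖)) (stdGaussian n) := by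
      have e1 := (integrable_norm_std n).const_mul (‖fderiv ℝ h x₀‖ * μ)
      have e2 := (integrable_normsq_std n).const_mul ((L : ℝ) * μ ^ 2)
      have e3 := ((integrable_const (|h x₀|)).add e1).add e2
      refine e3.congr (Filter.Eventually.of_forall fun u => ?_)
      simp only [Pi.add_apply]
      ring
    refine hint.mono' ((hcont.comp (continuous_const.add ((continuous_const (y := μ)).smul continuous_id))).aestronglyMeasurable)
      (Filter.Eventually.of_forall hb)
  · exact ((fderiv_cont hL).comp (continuous_const.add ((continuous_const (y := μ)).smul continuous_id))).aestronglyMeasurable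
  · -- bound
    filter_upwards with u x hx
    have := fderiv_norm_le hL (x + μ • u) x₀
    have hxx : ‖x + μ • u - x₀‖ ≤ 1 + μ * ‖u‖ := by
      have h1 : ‖x + μ • u - x₀‖ ≤ ‖x - x₀‖ + ‖μ • u‖ := by
        have : x + μ • u - x₀ = (x - x₀) + μ • u := by abel
        rw [this]; exact norm_add_le _ _
      have h2 : ‖x - x₀‖ ≤ 1 := by
        rw [Metric.mem_ball, dist_eq_norm] at hx; linarith
      have h3 : ‖μ • u‖ = μ * ‖u‖ := by rw [norm_smul, Real.norm_eq_abs, abs_of_pos hμ]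
      linarith
    have hLm : (L:ℝ) * ‖x + μ • u - x₀‖ ≤ L * (1 + μ * ‖u‖) := by gcongr
    linarith
  · -- bound integrable
    have e1 := (integrable_norm_std n).const_mul ((L : ℝ) * μ)
    have e3 := (integrable_const (‖fderiv ℝ h x₀‖ + (L : ℝ))).add e1
    refine e3.congr (Filter.Eventually.of_forall fun u => ?_)
    simp only [Pi.add_apply]
    ring
  · -- differentiability
    filter_upwards with u x hx
    have h1 : HasFDerivAt (fun x : Vec n => x + μ • u) (ContinuousLinearMap.id ℝ (Vec n)) x :=
      (hasFDerivAt_id x).add_const (μ • u)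
    have h2 := (hd (x + μ • u)).hasFDerivAt.comp x h1
    exact h2

end main

theorem statement15 {n : ℕ} (h : Vec n → ℝ) (hd : Differentiable ℝ h)
    (L : NNReal) (hL : LipschitzWith L (gradient h)) (μ : ℝ) (hμ : 0 < μ) :
    ∀ x : Vec n,
      ‖gradient (smooth h μ) x - gradient h x‖ ≤
        μ / 2 * L * ((n : ℝ) + 3) ^ ((3 : ℝ) / 2) := by
  intro x
  have hkey := hasFDerivAt_smooth hd hL hμ x
  have hmeas : AEStronglyMeasurable (fun u : Vec n => fderiv ℝ h (x + μ • u)) (stdGaussian n) :=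
    ((fderiv_cont hL).comp (continuous_const.add ((continuous_const (y := μ)).smul continuous_id))).aestronglyMeasurable
  have hFint : Integrable (fun u : Vec n => fderiv ℝ h (x + μ • u)) (stdGaussian n) := by
    refine (((integrable_const (‖fderiv ℝ h x‖)).add
      ((integrable_norm_std n).const_mul ((L : ℝ) * μ))).mono'
      hmeas (Filter.Eventually.of_forall fun u => ?_))
    have hb := fderiv_norm_le hL (x + μ • u) x
    rw [add_sub_cancel_left, norm_smul, Real.norm_eq_abs, abs_of_pos hμ] at hb
    simp only [Pi.add_apply, norm_norm]
    nlinarith [norm_nonneg u]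
  have hgrad : gradient (smooth h μ) x - gradient h x
      = (InnerProductSpace.toDual ℝ (Vec n)).symm (fderiv ℝ (smooth h μ) x - fderiv ℝ h x) := by
    rw [gradient, gradient, map_sub]
  rw [hgrad, LinearIsometryEquiv.norm_map, hkey.fderiv]
  have hchain : ‖(∫ u, fderiv ℝ h (x + μ • u) ∂(stdGaussian n)) - fderiv ℝ h x‖
      ≤ (L : ℝ) * μ * (n : ℝ) := by
    calc ‖(∫ u, fderiv ℝ h (x + μ • u) ∂(stdGaussian n)) - fderiv ℝ h x‖
        = ‖∫ u, (fderiv ℝ h (x + μ • u) - fderiv ℝ h x) ∂(stdGaussian n)‖ := by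
          rw [integral_sub hFint (integrable_const _), integral_const, probReal_univ,
            one_smul]
      _ ≤ ∫ u, ‖fderiv ℝ h (x + μ • u) - fderiv ℝ h x‖ ∂(stdGaussian n) :=
          norm_integral_le_integral_norm _
      _ ≤ ∫ u, (L : ℝ) * μ * ‖u‖ ∂(stdGaussian n) := by
          refine integral_mono (hFint.sub (integrable_const _)).norm
            ((integrable_norm_std n).const_mul _) fun u => ?_
          have := fderiv_sub_norm hL (x + μ • u) x
          rw [add_sub_cancel_left, norm_smul, Real.norm_eq_abs, abs_of_pos hμ] at this
          calc ‖fderiv ℝ h (x + μ • u) - fderiv ℝ h x‖ ≤ L * (μ * ‖u‖) := this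
            _ = (L : ℝ) * μ * ‖u‖ := by ring
      _ = (L : ℝ) * μ * ∫ u, ‖u‖ ∂(stdGaussian n) := integral_const_mul _ _
      _ ≤ (L : ℝ) * μ * (n : ℝ) := by
          have hLμ : (0:ℝ) ≤ (L : ℝ) * μ := by positivity
          exact mul_le_mul_of_nonneg_left (integral_norm_std_le n) hLμ
  refine hchain.trans ?_
  -- arithmetic: L * μ * n ≤ μ/2 * L * (n+3)^(3/2)
  have hpos : (0:ℝ) ≤ (n : ℝ) + 3 := by positivity
  have hr : ((n : ℝ) + 3) ^ ((3:ℝ)/2) = ((n : ℝ) + 3) * √((n : ℝ) + 3) := by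
    rw [show (3:ℝ)/2 = 1 + 1/2 by norm_num, Real.rpow_add (by positivity), Real.rpow_one,
      ← Real.sqrt_eq_rpow]
  rw [hr]
  rcases Nat.eq_zero_or_pos n with hn | hn
  · subst hn
    simp only [Nat.cast_zero, mul_zero]
    positivity
  · have h4 : (4:ℝ) ≤ (n : ℝ) + 3 := by
      have : (1:ℝ) ≤ (n : ℝ) := by exact_mod_cast hn
      linarith
    have hsq : (2:ℝ) ≤ √((n : ℝ) + 3) := by
      nlinarith [Real.sq_sqrt hpos, Real.sqrt_nonneg ((n : ℝ) + 3)]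
    have hn0 : (0:ℝ) ≤ (n : ℝ) := Nat.cast_nonneg n
    have hLc : (0:ℝ) ≤ (L : ℝ) := NNReal.coe_nonneg L
    calc (L : ℝ) * μ * (n : ℝ) ≤ μ * L * ((n : ℝ) + 3) := by nlinarith
      _ = μ / 2 * L * (((n : ℝ) + 3) * 2) := by ring
      _ ≤ μ / 2 * L * (((n : ℝ) + 3) * √((n : ℝ) + 3)) := by
          have h0 : (0:ℝ) ≤ μ / 2 * L := by positivity
          gcongr
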